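/- The set W of formulas of the strictly positive reflection calculus RC⁰ is well-founded with respect to the relation <₀, where A <₀ B iff RC⁰ derives the sequent B ⊢ ◇₀A. Consequently (together with the RC⁰-provable linearity of <₀ on W modulo mutual derivability ∼), the Beklemishev ordinal notation system (W/∼, <₀) is a well-ordering. -/

import Mathlib

/-!
STATEMENT 19. The set `W` of formulas of the strictly positive reflection calculus `RC⁰`
is well-founded with respect to the relation `<₀`, where `A <₀ B` iff `RC⁰` derives the
sequent `B ⊢ ◇₀A`.  Consequently (together with the `RC⁰`-provable linearity of `<₀` on
`W` modulo mutual derivability `∼`), the Beklemishev ordinal notation system `(W/∼, <₀)`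
is a well-ordering.
-/

/-- Formulas of the strictly positive reflection calculus `RC⁰`:
`F ::= ⊤ | F ∧ F | ◇ₙ F`. -/
inductive RCForm : Type
  | top : RCForm
  | and : RCForm → RCForm → RCForm
  | dia : ℕ → RCForm → RCForm

/-- Derivability of sequents `A ⊢ B` in the calculus `RC⁰`. -/
inductive RCSeq : RCForm → RCForm → Prop
  | id (A : RCForm) : RCSeq A A
  | top (A : RCForm) : RCSeq A .top
  | cut {A B C : RCForm} : RCSeq A B → RCSeq B C → RCSeq A C
  | andE₁ (A B : RCForm) : RCSeq (.and A B) A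
  | andE₂ (A B : RCForm) : RCSeq (.and A B) B
  | andI {A B C : RCForm} : RCSeq A B → RCSeq A C → RCSeq A (.and B C)
  | mono {A B : RCForm} (n : ℕ) : RCSeq A B → RCSeq (.dia n A) (.dia n B)
  | trans (n : ℕ) (A : RCForm) : RCSeq (.dia n (.dia n A)) (.dia n A)
  | monoN {n m : ℕ} (A : RCForm) : m < n → RCSeq (.dia n A) (.dia m A)
  | axJ {n m : ℕ} (A B : RCForm) : m < n →
      RCSeq (.and (.dia n A) (.dia m B)) (.dia n (.and A (.dia m B)))

/-- `A <₀ B` iff `RC⁰` derives the sequent `B ⊢ ◇₀A`. -/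
def RCLt0 (A B : RCForm) : Prop := RCSeq B (.dia 0 A)

/-- Mutual derivability `A ∼ B`, as a setoid on `RC⁰` formulas. -/
def RCSetoid : Setoid RCForm where
  r A B := RCSeq A B ∧ RCSeq B A
  iseqv :=
    ⟨fun A => ⟨RCSeq.id A, RCSeq.id A⟩,
     fun h => ⟨h.2, h.1⟩,
     fun h₁ h₂ => ⟨RCSeq.cut h₁.1 h₂.1, RCSeq.cut h₂.2 h₁.2⟩⟩

/-- The Beklemishev ordinal notation system: `RC⁰` formulas modulo mutual
derivability. -/
def RCW : Type := Quotient RCSetoid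

/-- The relation `<₀` descends to the quotient `W/∼`. -/
def RCWLt : RCW → RCW → Prop :=
  Quotient.lift₂ RCLt0 <| by
    intro A₁ B₁ A₂ B₂ hA hB
    refine propext ⟨fun h => ?_, fun h => ?_⟩
    · exact RCSeq.cut hB.2 (RCSeq.cut h (RCSeq.mono 0 hA.1))
    · exact RCSeq.cut hB.1 (RCSeq.cut h (RCSeq.mono 0 hA.2))

namespace RC0

open RCForm RCSeq

/-! ### Basic derived facts about the calculus -/

def Eqv (A B : RCForm) : Prop := RCSeq A B ∧ RCSeq B A

theorem Eqv.rfl {A : RCForm} : Eqv A A := ⟨.id A, .id A⟩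

theorem Eqv.symm' {A B : RCForm} (h : Eqv A B) : Eqv B A := ⟨h.2, h.1⟩

theorem Eqv.trans' {A B C : RCForm} (h : Eqv A B) (h' : Eqv B C) : Eqv A C :=
  ⟨.cut h.1 h'.1, .cut h'.2 h.2⟩

theorem Eqv.dia {A B : RCForm} (n : ℕ) (h : Eqv A B) : Eqv (.dia n A) (.dia n B) :=
  ⟨.mono n h.1, .mono n h.2⟩

theorem Eqv.and' {A A' B B' : RCForm} (h : Eqv A A') (h' : Eqv B B') :
    Eqv (.and A B) (.and A' B') :=
  ⟨.andI (.cut (.andE₁ _ _) h.1) (.cut (.andE₂ _ _) h'.1),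
   .andI (.cut (.andE₁ _ _) h.2) (.cut (.andE₂ _ _) h'.2)⟩

theorem and_comm_eqv {A B : RCForm} : Eqv (.and A B) (.and B A) :=
  ⟨.andI (.andE₂ _ _) (.andE₁ _ _), .andI (.andE₂ _ _) (.andE₁ _ _)⟩

theorem top_and_eqv {A : RCForm} : Eqv (.and .top A) A :=
  ⟨.andE₂ _ _, .andI (.top A) (.id A)⟩

theorem dia_down {n m : ℕ} (h : m ≤ n) (A : RCForm) : RCSeq (.dia n A) (.dia m A) := by
  rcases eq_or_lt_of_le h with h | h
  · cases h; exact .id _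
  · exact .monoN A h

/-- `◇ₙ ◇₀ A ⊢ ◇₀ A` -/
theorem dia_dia_zero {n : ℕ} (A : RCForm) : RCSeq (.dia n (.dia 0 A)) (.dia 0 A) :=
  .cut (dia_down (Nat.zero_le n) _) (.trans 0 A)

/-- `◇ₙ A ∧ ◇₀ B ≡ ◇ₙ (A ∧ ◇₀ B)` for `n > 0`, and more generally for `◇ₘ`, `m < n`. -/
theorem L2eq {n m : ℕ} (h : m < n) (A B : RCForm) :
    Eqv (.and (.dia n A) (.dia m B)) (.dia n (.and A (.dia m B))) := by
  constructor
  · exact .axJ A B h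
  · refine .andI (.mono n (.andE₁ _ _)) ?_
    exact .cut (.mono n (.andE₂ _ _)) (.cut (.monoN _ h) (.trans m B))

/-! ### Worms (words) -/

def wfc : List ℕ → RCForm → RCForm
  | [], X => X
  | a :: u, X => .dia a (wfc u X)

def wfm (u : List ℕ) : RCForm := wfc u .top

@[simp] theorem wfm_nil : wfm [] = .top := rfl
@[simp] theorem wfm_cons (a : ℕ) (u : List ℕ) : wfm (a :: u) = .dia a (wfm u) := rfl

theorem wfc_append (p q : List ℕ) (X : RCForm) : wfc (p ++ q) X = wfc p (wfc q X) := by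
  induction p with
  | nil => rfl
  | cons a p ih => simp [wfc, ih]

theorem wfm_append (p q : List ℕ) : wfm (p ++ q) = wfc p (wfm q) := wfc_append p q .top

theorem Mlem {X Y : RCForm} (p : List ℕ) (h : RCSeq X Y) : RCSeq (wfc p X) (wfc p Y) := by
  induction p with
  | nil => exact h
  | cons a p ih => exact .mono a ih

theorem Meqv {X Y : RCForm} (p : List ℕ) (h : Eqv X Y) : Eqv (wfc p X) (wfc p Y) :=
  ⟨Mlem p h.1, Mlem p h.2⟩

/-- drop an inner tail : `wfm (p ++ 0::s) ⊢ wfm p` -/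
theorem projP (p s : List ℕ) : RCSeq (wfm (p ++ 0 :: s)) (wfm p) := by
  rw [wfm_append]
  exact Mlem p (.top _)

/-- extract the tail after a zero: `wfm (p ++ 0::s) ⊢ ◇₀ (wfm s)` -/
theorem Dlem (p s : List ℕ) : RCSeq (wfm (p ++ 0 :: s)) (.dia 0 (wfm s)) := by
  induction p with
  | nil => exact .id _
  | cons a p ih =>
    exact .cut (.mono a ih) (dia_dia_zero _)

/-- Key lemma: for a `0`-free prefix `p`,
`wfm p ∧ ◇₀ (wfm s) ≡ wfm (p ++ 0 :: s)`. -/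
theorem Keq {p : List ℕ} (hp : ∀ a ∈ p, a ≠ 0) (s : List ℕ) :
    Eqv (.and (wfm p) (.dia 0 (wfm s))) (wfm (p ++ 0 :: s)) := by
  induction p with
  | nil => exact top_and_eqv
  | cons a p ih =>
    have ha : 0 < a := Nat.pos_of_ne_zero (hp a (by simp))
    have ih' := ih (fun b hb => hp b (by simp [hb]))
    exact (L2eq ha (wfm p) (wfm s)).trans' (Eqv.dia a ih')

/-! ### Promotion (shifting all modalities up by one) -/

def fUp : RCForm → RCForm
  | .top => .top
  | .and A B => .and (fUp A) (fUp B)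
  | .dia n A => .dia (n + 1) (fUp A)

theorem fUp_seq {A B : RCForm} (h : RCSeq A B) : RCSeq (fUp A) (fUp B) := by
  induction h with
  | id A => exact .id _
  | top A => exact .top _
  | cut _ _ ih₁ ih₂ => exact .cut ih₁ ih₂
  | andE₁ A B => exact .andE₁ _ _
  | andE₂ A B => exact .andE₂ _ _
  | andI _ _ ih₁ ih₂ => exact .andI ih₁ ih₂
  | mono n _ ih => exact .mono _ ih
  | trans n A => exact .trans _ _
  | monoN A h => exact .monoN _ (Nat.succ_lt_succ h)
  | axJ A B h => exact .axJ _ _ (Nat.succ_lt_succ h)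

theorem wfm_up (u : List ℕ) : wfm (u.map (· + 1)) = fUp (wfm u) := by
  induction u with
  | nil => rfl
  | cons a u ih =>
    show RCForm.dia (a+1) (wfm (u.map (· + 1))) = RCForm.dia (a+1) (fUp (wfm u))
    rw [ih]

theorem dn_up {u : List ℕ} (hu : ∀ a ∈ u, a ≠ 0) :
    (u.map (· - 1)).map (· + 1) = u := by
  rw [List.map_map]
  conv_rhs => rw [← List.map_id u]
  refine List.map_congr_left ?_
  intro a ha
  have := hu a ha
  simp; omega

end RC0

namespace RC0

open Ordinal

/-! ### Ordinal arithmetic facts -/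

theorem eqexp_aux {a b e f : Ordinal} (h : e < f) : a + ω ^ e ≠ b + ω ^ f := by
  intro heq
  rcases le_or_gt a b with hab | hab
  · obtain ⟨d, rfl⟩ : ∃ d, b = a + d := ⟨b - a, (Ordinal.add_sub_cancel_of_le hab).symm⟩
    rw [add_assoc] at heq
    have h1 : ω ^ e = d + ω ^ f := (add_right_inj a).1 heq
    have h2 : ω ^ f ≤ ω ^ e := h1 ▸ le_add_self
    exact absurd ((Ordinal.opow_lt_opow_iff_right one_lt_omega0).2 h) h2.not_gt
  · obtain ⟨d, rfl⟩ : ∃ d, a = b + d := ⟨a - b, (Ordinal.add_sub_cancel_of_le hab.le).symm⟩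
    have hd : 0 < d := by
      rcases (zero_le (a := d)).lt_or_eq with h0 | h0
      · exact h0
      · rw [← h0, add_zero] at hab; exact absurd hab (lt_irrefl b)
    rw [add_assoc] at heq
    have heq' : d + ω ^ e = ω ^ f := (add_right_inj b).1 heq
    have hdlt : d < ω ^ f := by
      rcases lt_or_eq_of_le (heq' ▸ (le_self_add : d ≤ d + ω ^ e)) with h' | h'
      · exact h'
      · exfalso
        have h2 : ω ^ f + 0 < ω ^ f + ω ^ e :=
          (add_lt_add_iff_left (ω ^ f)).2 (opow_pos e omega0_pos)
        rw [add_zero] at h2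
        rw [h'] at heq'
        rw [heq'] at h2
        exact h2.false
    have hlt : d + ω ^ e < ω ^ f := Ordinal.principal_add_omega0_opow f hdlt
      ((Ordinal.opow_lt_opow_iff_right one_lt_omega0).2 h)
    rw [heq'] at hlt
    exact hlt.false

theorem eqexp {a b e f : Ordinal} (h : a + ω ^ e = b + ω ^ f) : e = f := by
  rcases lt_trichotomy e f with h' | h' | h'
  · exact absurd h (eqexp_aux h')
  · exact h'
  · exact absurd h.symm (eqexp_aux h')

/-- If `y < c + ω^e'` and `e ≤ e'` then `y + ω^e ≤ c + ω^e'`. -/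
theorem fact1 {c e' e y : Ordinal} (he : e ≤ e') (hy : y < c + ω ^ e') :
    y + ω ^ e ≤ c + ω ^ e' := by
  rcases le_or_gt y c with h | h
  · exact add_le_add h (Ordinal.opow_le_opow_right omega0_pos he)
  · obtain ⟨d, rfl⟩ : ∃ d, y = c + d := ⟨y - c, (Ordinal.add_sub_cancel_of_le h.le).symm⟩
    have hd : d < ω ^ e' := (add_lt_add_iff_left c).1 hy
    rw [add_assoc]
    refine add_le_add_right ?_ c
    rcases lt_or_eq_of_le he with h' | h'
    · exact (Ordinal.principal_add_omega0_opow e' hd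
        ((Ordinal.opow_lt_opow_iff_right one_lt_omega0).2 h')).le
    · subst h'
      rw [Ordinal.add_omega0_opow hd]

/-! ### The weight of a word and the zero-splitting -/

def wt (u : List ℕ) : ℕ := (u.map (· + 1)).sum

@[simp] theorem wt_nil : wt [] = 0 := rfl
@[simp] theorem wt_cons (a : ℕ) (u : List ℕ) : wt (a :: u) = a + 1 + wt u := by
  simp [wt]

theorem wt_append (p q : List ℕ) : wt (p ++ q) = wt p + wt q := by
  simp [wt]

theorem wt_pos {u : List ℕ} (h : u ≠ []) : 0 < wt u := by
  cases u with
  | nil => exact absurd rfl h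
  | cons a u => simp

theorem wt_map_sub_le (u : List ℕ) : wt (u.map (· - 1)) ≤ wt u := by
  induction u with
  | nil => simp
  | cons a u ih => simp only [List.map_cons, wt_cons]; omega

theorem wt_map_sub_lt {u : List ℕ} (hne : u ≠ []) (h0 : ∀ a ∈ u, a ≠ 0) :
    wt (u.map (· - 1)) < wt u := by
  cases u with
  | nil => exact absurd rfl hne
  | cons a u =>
    have h1 := wt_map_sub_le u
    have h2 : a ≠ 0 := h0 a (by simp)
    simp only [List.map_cons, wt_cons]
    omega

def zsplit : List ℕ → List ℕ × Option (List ℕ)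
  | [] => ([], none)
  | 0 :: s => ([], some s)
  | (a + 1) :: w => ((a + 1) :: (zsplit w).1, (zsplit w).2)

theorem zsplit_spec (u : List ℕ) :
    ((zsplit u).2 = none ∧ (zsplit u).1 = u ∧ ∀ a ∈ u, a ≠ 0) ∨
    (∃ s, (zsplit u).2 = some s ∧ u = (zsplit u).1 ++ 0 :: s ∧ ∀ a ∈ (zsplit u).1, a ≠ 0) := by
  induction u with
  | nil => left; exact ⟨rfl, rfl, by simp⟩
  | cons a u ih =>
    cases a with
    | zero => right; exact ⟨u, rfl, rfl, by simp [zsplit]⟩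
    | succ a =>
      rcases ih with ⟨h1, h2, h3⟩ | ⟨s, h1, h2, h3⟩
      · left
        refine ⟨h1, ?_, ?_⟩
        · simp [zsplit, h2]
        · intro b hb; rcases List.mem_cons.1 hb with rfl | hb
          · simp
          · exact h3 b hb
      · right
        refine ⟨s, h1, ?_, ?_⟩
        · show (a+1) :: u = ((a+1) :: (zsplit u).1) ++ 0 :: s
          simp [← h2]
        · intro b hb
          rcases List.mem_cons.1 hb with rfl | hb
          · simp
          · exact h3 b hb

theorem zsplit_zfree {u : List ℕ} (h : ∀ a ∈ u, a ≠ 0) : zsplit u = (u, none) := by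
  induction u with
  | nil => rfl
  | cons a u ih =>
    cases a with
    | zero => exact absurd rfl (h 0 (by simp))
    | succ a =>
      have := ih (fun b hb => h b (by simp [hb]))
      simp [zsplit, this]

theorem zsplit_split {p : List ℕ} (hp : ∀ a ∈ p, a ≠ 0) (s : List ℕ) :
    zsplit (p ++ 0 :: s) = (p, some s) := by
  induction p with
  | nil => rfl
  | cons a p ih =>
    cases a with
    | zero => exact absurd rfl (hp 0 (by simp))
    | succ a =>
      have := ih (fun b hb => hp b (by simp [hb]))
      simp [zsplit, this]

/-! ### The ordinal of a word -/

noncomputable def odo : List ℕ → Ordinal.{0}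
  | [] => 0
  | a :: w =>
    match h : zsplit (a :: w) with
    | (p, none) => ω ^ odo (p.map (· - 1))
    | (p, some s) => odo s + ω ^ odo (p.map (· - 1))
  termination_by u => wt u
  decreasing_by
  · -- none case : p = a :: w, zero-free
    rcases zsplit_spec (a :: w) with ⟨h1, h2, h3⟩ | ⟨s', h1, _, _⟩
    · rw [h] at h2
      simp only at h2
      subst h2
      exact wt_map_sub_lt (by simp) h3
    · rw [h] at h1
      simp at h1
  · -- some case : recursive call on s
    rcases zsplit_spec (a :: w) with ⟨h1, _, _⟩ | ⟨s', h1, h2, h3⟩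
    · rw [h] at h1; simp at h1
    · rw [h] at h1 h2
      simp only [Option.some.injEq] at h1
      subst h1
      simp only at h2
      rw [h2, wt_append, wt_cons]
      omega
  · -- some case : recursive call on p.map
    rcases zsplit_spec (a :: w) with ⟨h1, _, _⟩ | ⟨s', h1, h2, h3⟩
    · rw [h] at h1; simp at h1
    · rw [h] at h1 h2
      simp only [Option.some.injEq] at h1
      subst h1
      simp only at h2
      have := wt_map_sub_le p
      rw [h2, wt_append, wt_cons]
      omega

@[simp] theorem odo_nil : odo [] = 0 := by simp [odo]

theorem odo_zfree {u : List ℕ} (hne : u ≠ []) (h : ∀ a ∈ u, a ≠ 0) :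
    odo u = ω ^ odo (u.map (· - 1)) := by
  cases u with
  | nil => exact absurd rfl hne
  | cons a w =>
    rw [odo]
    rw [zsplit_zfree h]

theorem odo_split {p : List ℕ} (hp : ∀ a ∈ p, a ≠ 0) (s : List ℕ) :
    odo (p ++ 0 :: s) = odo s + ω ^ odo (p.map (· - 1)) := by
  have hz := zsplit_split hp s
  cases hpp : p ++ 0 :: s with
  | nil => exact absurd hpp (by simp)
  | cons a w =>
    rw [odo, ← hpp, hz]

theorem odo_pos {u : List ℕ} (hne : u ≠ []) : 0 < odo u := by
  rcases zsplit_spec u with ⟨_, h2, h3⟩ | ⟨s, _, h2, h3⟩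
  · rw [odo_zfree hne (h2 ▸ h3)]
    exact opow_pos _ omega0_pos
  · rw [h2, odo_split h3]
    exact lt_of_lt_of_le (opow_pos _ omega0_pos) (le_add_self)

theorem odo_eq_zero_iff {u : List ℕ} : odo u = 0 ↔ u = [] := by
  constructor
  · intro h
    by_contra hne
    exact absurd h (odo_pos hne).ne'
  · rintro rfl; simp

end RC0

namespace RC0

open Ordinal RCForm RCSeq

theorem zsplit_spec' (u : List ℕ) :
    (∀ a ∈ u, a ≠ 0) ∨ ∃ q t, u = q ++ 0 :: t ∧ ∀ a ∈ q, a ≠ 0 := by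
  rcases zsplit_spec u with ⟨_, h2, h3⟩ | ⟨s, _, h2, h3⟩
  · left; exact h2 ▸ h3
  · right; exact ⟨(zsplit u).1, s, h2, h3⟩

theorem lt_add_opow (y e : Ordinal) : y < y + ω ^ e := by
  have h := (add_lt_add_iff_left y).2 (opow_pos e omega0_pos)
  rwa [add_zero] at h

theorem opow_inj {a b : Ordinal} (h : ω ^ a = ω ^ b) : a = b := by
  rcases lt_trichotomy a b with h' | h' | h'
  · exact absurd (h ▸ (Ordinal.opow_lt_opow_iff_right one_lt_omega0).2 h') (lt_irrefl _)
  · exact h'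
  · exact absurd (h ▸ (Ordinal.opow_lt_opow_iff_right one_lt_omega0).2 h') (lt_irrefl _)

theorem promote_lt {u v : List ℕ} (h0u : ∀ a ∈ u, a ≠ 0) (h0v : ∀ a ∈ v, a ≠ 0)
    (h : RCSeq (wfm (v.map (· - 1))) (.dia 0 (wfm (u.map (· - 1))))) :
    RCSeq (wfm v) (.dia 1 (wfm u)) := by
  have h1 := fUp_seq h
  rw [← wfm_up, dn_up h0v] at h1
  have h2 : fUp (.dia 0 (wfm (u.map (· - 1)))) = .dia 1 (wfm u) := by
    show RCForm.dia 1 (fUp (wfm (u.map (· - 1)))) = .dia 1 (wfm u)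
    rw [← wfm_up, dn_up h0u]
  rwa [h2] at h1

theorem promote_eqv {u v : List ℕ} (h0u : ∀ a ∈ u, a ≠ 0) (h0v : ∀ a ∈ v, a ≠ 0)
    (h : Eqv (wfm (u.map (· - 1))) (wfm (v.map (· - 1)))) :
    Eqv (wfm u) (wfm v) := by
  have h1 := fUp_seq h.1
  have h2 := fUp_seq h.2
  rw [← wfm_up, ← wfm_up, dn_up h0u, dn_up h0v] at h1 h2
  exact ⟨h1, h2⟩

/-- The main comparison theorem for worms: the ordinal order is reflected by
derivability. -/
theorem main : ∀ (N : ℕ) (u v : List ℕ), wt u + wt v ≤ N →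
    (odo u < odo v → RCSeq (wfm v) (.dia 0 (wfm u))) ∧
    (odo u = odo v → Eqv (wfm u) (wfm v)) := by
  intro N
  induction N with
  | zero =>
    intro u v hN
    have hu : u = [] := by
      cases u with
      | nil => rfl
      | cons a u => exfalso; have := wt_pos (u := a :: u) (by simp); omega
    have hv : v = [] := by
      cases v with
      | nil => rfl
      | cons a v => exfalso; have := wt_pos (u := a :: v) (by simp); omega
    subst hu; subst hv
    exact ⟨fun h => absurd h (lt_irrefl _), fun _ => Eqv.rfl⟩
  | succ N IH =>
    intro u v hN
    have IH' : ∀ u' v' : List ℕ, wt u' + wt v' < wt u + wt v →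
        (odo u' < odo v' → RCSeq (wfm v') (.dia 0 (wfm u'))) ∧
        (odo u' = odo v' → Eqv (wfm u') (wfm v')) := by
      intro u' v' h
      exact IH u' v' (by omega)
    clear IH hN
    by_cases hu : u = []
    · subst hu
      constructor
      · intro hlt
        cases v with
        | nil => exact absurd hlt (lt_irrefl _)
        | cons b v' =>
          show RCSeq (.dia b (wfm v')) (.dia 0 .top)
          exact .cut (.mono b (.top _)) (dia_down (Nat.zero_le b) _)
      · intro heq
        have : v = [] := odo_eq_zero_iff.1 (by rw [← heq]; simp)
        subst this; exact Eqv.rfl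
    by_cases hv : v = []
    · subst hv
      constructor
      · intro hlt
        simp only [odo_nil] at hlt
        exact absurd hlt (not_lt_zero)
      · intro heq
        simp only [odo_nil] at heq
        exact absurd (odo_eq_zero_iff.1 heq) hu
    -- both nonempty
    rcases zsplit_spec' u with hu3 | ⟨q, t, hu2, hq3⟩
    · -- u is zero-free
      have hou : odo u = ω ^ odo (u.map (· - 1)) := odo_zfree hu hu3
      rcases zsplit_spec' v with hv3 | ⟨p, s, hv2, hp3⟩
      · -- CASE A : both zero-free
        have hov : odo v = ω ^ odo (v.map (· - 1)) := odo_zfree hv hv3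
        have hm : wt (u.map (· - 1)) + wt (v.map (· - 1)) < wt u + wt v := by
          have := wt_map_sub_lt hu hu3
          have := wt_map_sub_lt hv hv3
          omega
        constructor
        · intro hlt
          rw [hou, hov] at hlt
          have h1 := (Ordinal.opow_lt_opow_iff_right one_lt_omega0).1 hlt
          have h2 := (IH' _ _ hm).1 h1
          exact .cut (promote_lt hu3 hv3 h2) (.monoN _ (by omega))
        · intro heq
          rw [hou, hov] at heq
          exact promote_eqv hu3 hv3 ((IH' _ _ hm).2 (opow_inj heq))
      · -- CASE B : u zero-free, v = p ++ 0 :: s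
        subst hv2
        have hov : odo (p ++ 0 :: s) = odo s + ω ^ odo (p.map (· - 1)) := odo_split hp3 s
        have hms : wt u + wt s < wt u + wt (p ++ 0 :: s) := by
          rw [wt_append, wt_cons]; omega
        have hmp : wt (u.map (· - 1)) + wt (p.map (· - 1)) < wt u + wt (p ++ 0 :: s) := by
          have := wt_map_sub_lt hu hu3
          have := wt_map_sub_le p
          rw [wt_append, wt_cons]; omega
        constructor
        · intro hlt
          rcases lt_trichotomy (odo u) (odo s) with h1 | h1 | h1
          · have hs := (IH' u s hms).1 h1
            exact .cut (Dlem p s) (.cut (.mono 0 hs) (.trans 0 _))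
          · have hs := (IH' u s hms).2 h1
            exact .cut (Dlem p s) (.mono 0 hs.2)
          · have hexp : odo (u.map (· - 1)) < odo (p.map (· - 1)) := by
              by_contra hcon
              push_neg at hcon
              have h2 : odo s < (0 : Ordinal) + ω ^ odo (u.map (· - 1)) := by
                rw [zero_add, ← hou]; exact h1
              have h3 := fact1 hcon h2
              rw [zero_add, ← hou] at h3
              rw [hou, hov] at hlt
              rw [hou] at h3
              exact absurd (lt_of_lt_of_le hlt h3) (lt_irrefl _)
            have hqp := (IH' _ _ hmp).1 hexp
            have hp := promote_lt hu3 hp3 hqp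
            exact .cut (projP p s) (.cut hp (.monoN _ (by omega)))
        · intro heq
          have heq' : (0 : Ordinal) + ω ^ odo (u.map (· - 1)) =
              odo s + ω ^ odo (p.map (· - 1)) := by
            rw [zero_add, ← hou, ← hov]; exact heq
          have hexp := eqexp heq'
          have hslt : odo s < odo u := by
            by_contra hcon
            push_neg at hcon
            have h2 : odo u < odo s + ω ^ odo (p.map (· - 1)) :=
              lt_of_lt_of_le (lt_add_opow _ _) (add_le_add_left hcon _)
            rw [← hov, ← heq] at h2
            exact absurd h2 (lt_irrefl _)
          have h4 := (IH' s u (by rw [wt_append, wt_cons]; omega)).1 hslt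
          have h5 := promote_eqv hu3 hp3 ((IH' _ _ hmp).2 hexp)
          have K := Keq hp3 s
          exact ⟨.cut (.andI h5.1 h4) K.1, .cut (projP p s) h5.2⟩
    · -- u = q ++ 0 :: t
      subst hu2
      have hou : odo (q ++ 0 :: t) = odo t + ω ^ odo (q.map (· - 1)) := odo_split hq3 t
      have htu : odo t < odo (q ++ 0 :: t) := by rw [hou]; exact lt_add_opow _ _
      rcases zsplit_spec' v with hv3 | ⟨p, s, hv2, hp3⟩
      · -- CASE C : u = q ++ 0 :: t, v zero-free
        have hov : odo v = ω ^ odo (v.map (· - 1)) := odo_zfree hv hv3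
        have hmq : wt (q.map (· - 1)) + wt (v.map (· - 1)) < wt (q ++ 0 :: t) + wt v := by
          have := wt_map_sub_le q
          have := wt_map_sub_lt hv hv3
          rw [wt_append, wt_cons]; omega
        have hmt : wt t + wt v < wt (q ++ 0 :: t) + wt v := by
          rw [wt_append, wt_cons]; omega
        have K := Keq hq3 t
        constructor
        · intro hlt
          have h2 : odo t < odo v := htu.trans hlt
          have hexp : odo (q.map (· - 1)) < odo (v.map (· - 1)) := by
            refine (Ordinal.opow_lt_opow_iff_right one_lt_omega0).1 ?_
            calc ω ^ odo (q.map (· - 1)) ≤ odo (q ++ 0 :: t) := by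
                  rw [hou]; exact le_add_self
              _ < ω ^ odo (v.map (· - 1)) := by rw [← hov]; exact hlt
          have hq := promote_lt hq3 hv3 ((IH' _ _ hmq).1 hexp)
          have ht := (IH' t v hmt).1 h2
          exact .cut (.andI hq ht) (.cut (.axJ _ _ (by omega)) (.cut (.mono 1 K.1)
            (.monoN _ (by omega))))
        · intro heq
          have heq' : odo t + ω ^ odo (q.map (· - 1)) =
              (0 : Ordinal) + ω ^ odo (v.map (· - 1)) := by
            rw [zero_add, ← hou, ← hov]; exact heq
          have hexp := eqexp heq'
          have htlt : odo t < odo v := by rw [← heq]; exact htu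
          have hq := promote_eqv hq3 hv3 ((IH' _ _ hmq).2 hexp)
          have ht := (IH' t v hmt).1 htlt
          exact ⟨.cut (projP q t) hq.1, .cut (.andI hq.2 ht) K.1⟩
      · -- CASE D : u = q ++ 0 :: t, v = p ++ 0 :: s
        subst hv2
        have hov : odo (p ++ 0 :: s) = odo s + ω ^ odo (p.map (· - 1)) := odo_split hp3 s
        have hsv : odo s < odo (p ++ 0 :: s) := by rw [hov]; exact lt_add_opow _ _
        have hms : wt (q ++ 0 :: t) + wt s < wt (q ++ 0 :: t) + wt (p ++ 0 :: s) := by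
          rw [wt_append (p := p), wt_cons]; omega
        have hms' : wt s + wt (q ++ 0 :: t) < wt (q ++ 0 :: t) + wt (p ++ 0 :: s) := by
          rw [wt_append (p := p), wt_cons]; omega
        have hmq : wt (q.map (· - 1)) + wt (p.map (· - 1)) <
            wt (q ++ 0 :: t) + wt (p ++ 0 :: s) := by
          have := wt_map_sub_le q
          have := wt_map_sub_le p
          rw [wt_append, wt_cons, wt_append (p := p), wt_cons]; omega
        have hmt : wt t + wt (p ++ 0 :: s) < wt (q ++ 0 :: t) + wt (p ++ 0 :: s) := by
          rw [wt_append (p := q), wt_cons]; omega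
        have Ku := Keq hq3 t
        have Kv := Keq hp3 s
        constructor
        · intro hlt
          rcases lt_trichotomy (odo (q ++ 0 :: t)) (odo s) with h1 | h1 | h1
          · have hs := (IH' _ s hms).1 h1
            exact .cut (Dlem p s) (.cut (.mono 0 hs) (.trans 0 _))
          · have hs := (IH' _ s hms).2 h1
            exact .cut (Dlem p s) (.mono 0 hs.2)
          · have hexp : odo (q.map (· - 1)) < odo (p.map (· - 1)) := by
              by_contra hcon
              push_neg at hcon
              have h2 : odo s < odo t + ω ^ odo (q.map (· - 1)) := by
                rw [← hou]; exact h1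
              have h3 := fact1 hcon h2
              rw [← hou] at h3
              rw [hov] at hlt
              exact absurd (lt_of_lt_of_le hlt h3) (lt_irrefl _)
            have hq := promote_lt hq3 hp3 ((IH' _ _ hmq).1 hexp)
            have hvp : RCSeq (wfm (p ++ 0 :: s)) (wfm p) := projP p s
            have ht := (IH' t _ hmt).1 (htu.trans hlt)
            exact .cut (.andI (.cut hvp hq) ht) (.cut (.axJ _ _ (by omega))
              (.cut (.mono 1 Ku.1) (.monoN _ (by omega))))
        · intro heq
          have heq' : odo t + ω ^ odo (q.map (· - 1)) =
              odo s + ω ^ odo (p.map (· - 1)) := by rw [← hou, ← hov]; exact heq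
          have hexp := eqexp heq'
          have hqp := promote_eqv hq3 hp3 ((IH' _ _ hmq).2 hexp)
          have hVT := (IH' t _ hmt).1 (by rw [← heq]; exact htu)
          have hUS := (IH' s _ hms').1 (by rw [heq]; exact hsv)
          constructor
          · exact .cut (.andI (.cut (projP q t) hqp.1) hUS) Kv.1
          · exact .cut (.andI (.cut (projP p s) hqp.2) hVT) Ku.1

/-- Comparison, packaged. -/
theorem comp_lt {u v : List ℕ} (h : odo u < odo v) :
    RCSeq (wfm v) (.dia 0 (wfm u)) :=
  (main (wt u + wt v) u v le_rfl).1 h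

theorem comp_eq {u v : List ℕ} (h : odo u = odo v) : Eqv (wfm u) (wfm v) :=
  (main (wt u + wt v) u v le_rfl).2 h

end RC0

namespace RC0

open Ordinal RCForm RCSeq

theorem and_rot {A B C : RCForm} : Eqv (.and (.and A B) C) (.and (.and A C) B) :=
  ⟨.andI (.andI (.cut (.andE₁ _ _) (.andE₁ _ _)) (.andE₂ _ _)) (.cut (.andE₁ _ _) (.andE₂ _ _)),
   .andI (.andI (.cut (.andE₁ _ _) (.andE₁ _ _)) (.andE₂ _ _)) (.cut (.andE₁ _ _) (.andE₂ _ _))⟩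

theorem and_shuffle {A B C : RCForm} : Eqv (.and A (.and B C)) (.and (.and B A) C) :=
  ⟨.andI (.andI (.cut (.andE₂ _ _) (.andE₁ _ _)) (.andE₁ _ _)) (.cut (.andE₂ _ _) (.andE₂ _ _)),
   .andI (.cut (.andE₁ _ _) (.andE₂ _ _)) (.andI (.cut (.andE₁ _ _) (.andE₁ _ _)) (.andE₂ _ _))⟩

/-- `◇₀ (wfm v) ⊢ ◇₀ (wfm u)` whenever `odo u ≤ odo v`. -/
theorem dia0_mono_odo {u v : List ℕ} (h : odo u ≤ odo v) :
    RCSeq (.dia 0 (wfm v)) (.dia 0 (wfm u)) := by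
  rcases lt_or_eq_of_le h with h | h
  · exact .cut (.mono 0 (comp_lt h)) (.trans 0 _)
  · exact .mono 0 (comp_eq h).2

/-- Pushing a `◇₀`-conjunct into a worm. -/
theorem push (w t : List ℕ) :
    ∃ z, Eqv (.and (wfm w) (.dia 0 (wfm t))) (wfm z) := by
  induction w with
  | nil => exact ⟨0 :: t, top_and_eqv⟩
  | cons a w' ih =>
    cases a with
    | zero =>
      rcases le_total (odo t) (odo w') with h | h
      · exact ⟨0 :: w', .andE₁ _ _, .andI (.id _) (dia0_mono_odo h)⟩
      · exact ⟨0 :: t, .andE₂ _ _, .andI (dia0_mono_odo h) (.id _)⟩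
    | succ a =>
      obtain ⟨z', hz'⟩ := ih
      exact ⟨(a + 1) :: z', (L2eq (Nat.succ_pos a) (wfm w') (wfm t)).trans' (Eqv.dia _ hz')⟩

/-- Conjunction of two worms is equivalent to a worm. -/
theorem merge : ∀ (N : ℕ) (u v : List ℕ), wt u + wt v ≤ N →
    ∃ w, Eqv (.and (wfm u) (wfm v)) (wfm w) := by
  intro N
  induction N with
  | zero =>
    intro u v hN
    have hu : u = [] := by
      cases u with
      | nil => rfl
      | cons a u => exfalso; have := wt_pos (u := a :: u) (by simp); omega
    subst hu
    exact ⟨v, top_and_eqv⟩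
  | succ N IH =>
    intro u v hN
    have IH' : ∀ u' v' : List ℕ, wt u' + wt v' < wt u + wt v →
        ∃ w, Eqv (.and (wfm u') (wfm v')) (wfm w) := by
      intro u' v' h
      exact IH u' v' (by omega)
    clear IH hN
    cases hu : u with
    | nil => exact ⟨v, top_and_eqv⟩
    | cons a u' =>
    cases hv : v with
    | nil => exact ⟨a :: u', and_comm_eqv.trans' top_and_eqv⟩
    | cons b v' =>
    subst hu; subst hv
    rcases lt_trichotomy a b with hab | hab | hab
    · -- b > a : symmetric
      obtain ⟨w', hw'⟩ := IH' v' (a :: u') (by simp only [wt_cons]; omega)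
      exact ⟨b :: w', (and_comm_eqv.trans' (L2eq hab (wfm v') (wfm u'))).trans'
        (Eqv.dia b hw')⟩
    · -- equal heads
      subst hab
      cases a with
      | zero =>
        rcases le_total (odo u') (odo v') with h | h
        · exact ⟨0 :: v', ⟨.andE₂ _ _, .andI (dia0_mono_odo h) (.id _)⟩⟩
        · exact ⟨0 :: u', ⟨.andE₁ _ _, .andI (.id _) (dia0_mono_odo h)⟩⟩
      | succ a =>
        rcases zsplit_spec' u' with hu0 | ⟨q, t, hu2, hq0⟩
        · rcases zsplit_spec' v' with hv0 | ⟨p, s, hv2, hp0⟩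
          · -- all zero-free : promote downwards
            have hu0' : ∀ x ∈ (a + 1) :: u', x ≠ 0 := by
              intro x hx; rcases List.mem_cons.1 hx with rfl | hx
              · simp
              · exact hu0 x hx
            have hv0' : ∀ x ∈ (a + 1) :: v', x ≠ 0 := by
              intro x hx; rcases List.mem_cons.1 hx with rfl | hx
              · simp
              · exact hv0 x hx
            obtain ⟨w, hw⟩ := IH' (((a + 1) :: u').map (· - 1)) (((a + 1) :: v').map (· - 1))
              (by
                have := wt_map_sub_lt (u := (a + 1) :: u') (by simp) hu0'
                have := wt_map_sub_lt (u := (a + 1) :: v') (by simp) hv0'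
                omega)
            refine ⟨w.map (· + 1), ?_⟩
            have e1 : fUp (wfm (((a + 1) :: u').map (· - 1))) = wfm ((a + 1) :: u') := by
              rw [← wfm_up, dn_up hu0']
            have e2 : fUp (wfm (((a + 1) :: v').map (· - 1))) = wfm ((a + 1) :: v') := by
              rw [← wfm_up, dn_up hv0']
            have e3 : fUp (wfm w) = wfm (w.map (· + 1)) := (wfm_up w).symm
            rw [← e1, ← e2, ← e3]
            exact ⟨fUp_seq hw.1, fUp_seq hw.2⟩
          · -- v' = p ++ 0 :: s : extract the 0-tail of v
            subst hv2
            have hp0' : ∀ x ∈ (a + 1) :: p, x ≠ 0 := by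
              intro x hx; rcases List.mem_cons.1 hx with rfl | hx
              · simp
              · exact hp0 x hx
            have K := Keq hp0' s
            obtain ⟨m₁, hm₁⟩ := IH' ((a + 1) :: p) ((a + 1) :: u')
              (by
                have h1 : wt (p ++ 0 :: s) = wt p + 1 + wt s := by
                  rw [wt_append, wt_cons]; omega
                simp only [wt_cons]
                omega)
            obtain ⟨z, hz⟩ := push m₁ s
            refine ⟨z, ?_⟩
            refine (Eqv.and' Eqv.rfl K.symm').trans' ?_
            refine and_shuffle.trans' ?_
            exact (Eqv.and' hm₁ Eqv.rfl).trans' hz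
        · -- u' = q ++ 0 :: t : extract the 0-tail of u
          subst hu2
          have hq0' : ∀ x ∈ (a + 1) :: q, x ≠ 0 := by
            intro x hx; rcases List.mem_cons.1 hx with rfl | hx
            · simp
            · exact hq0 x hx
          have K := Keq hq0' t
          obtain ⟨m₁, hm₁⟩ := IH' ((a + 1) :: q) ((a + 1) :: v')
            (by
              have h1 : wt (q ++ 0 :: t) = wt q + 1 + wt t := by
                rw [wt_append, wt_cons]; omega
              simp only [wt_cons]
              omega)
          obtain ⟨z, hz⟩ := push m₁ t
          refine ⟨z, ?_⟩
          refine (Eqv.and' K.symm' Eqv.rfl).trans' ?_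
          refine and_rot.trans' ?_
          exact (Eqv.and' hm₁ Eqv.rfl).trans' hz
    · -- a > b : push v inside
      obtain ⟨w', hw'⟩ := IH' u' (b :: v') (by simp only [wt_cons]; omega)
      exact ⟨a :: w', (L2eq hab (wfm u') (wfm v')).trans' (Eqv.dia a hw')⟩

/-- Every formula is equivalent to a worm. -/
theorem normal_form (A : RCForm) : ∃ u, Eqv A (wfm u) := by
  induction A with
  | top => exact ⟨[], Eqv.rfl⟩
  | and A B ihA ihB =>
    obtain ⟨u, hu⟩ := ihA
    obtain ⟨v, hv⟩ := ihB
    obtain ⟨w, hw⟩ := merge (wt u + wt v) u v le_rfl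
    exact ⟨w, (Eqv.and' hu hv).trans' hw⟩
  | dia n A ihA =>
    obtain ⟨u, hu⟩ := ihA
    exact ⟨n :: u, Eqv.dia n hu⟩

end RC0

namespace RC0

open Ordinal RCForm RCSeq

/-! ### Decomposition of ordinals: the last exponent -/

theorem exists_decomp : ∀ α : Ordinal.{0}, 0 < α → ∃ e δ : Ordinal.{0}, α = δ + ω ^ e := by
  intro α
  induction α using Ordinal.induction with
  | h α IH =>
  intro hα
  set l := Ordinal.log ω α with hl
  have h1 : ω ^ l ≤ α := Ordinal.opow_log_le_self ω hα.ne'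
  have hne : (ω : Ordinal) ^ l ≠ 0 := (opow_pos l omega0_pos).ne'
  have hqr := Ordinal.div_add_mod α (ω ^ l)
  by_cases hr : α % ω ^ l = 0
  · have hq : α / ω ^ l < ω := by
      rw [Ordinal.div_lt hne]
      have h2 := Ordinal.lt_opow_succ_log_self one_lt_omega0 α
      rwa [← hl, Ordinal.opow_succ] at h2
    obtain ⟨n, hn⟩ := Ordinal.lt_omega0.1 hq
    have hn0 : n ≠ 0 := by
      rintro rfl
      rw [Nat.cast_zero] at hn
      rw [hn, mul_zero, zero_add, hr] at hqr
      exact absurd hqr.symm hα.ne'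
    obtain ⟨m, rfl⟩ := Nat.exists_eq_succ_of_ne_zero hn0
    refine ⟨l, ω ^ l * m, ?_⟩
    rw [← hqr, hr, add_zero, hn]
    have : ((m + 1 : ℕ) : Ordinal) = (m : Ordinal) + 1 := Nat.cast_succ m
    rw [this, mul_add, mul_one]
  · have hrlt : α % ω ^ l < α := lt_of_lt_of_le (Ordinal.mod_lt α hne) h1
    obtain ⟨e, δ, he⟩ := IH _ hrlt (pos_iff_ne_zero.2 hr)
    refine ⟨e, ω ^ l * (α / ω ^ l) + δ, ?_⟩
    conv_lhs => rw [← hqr]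
    rw [he, add_assoc]

noncomputable def lastE (α : Ordinal.{0}) : Ordinal.{0} := sInf {e | ∃ δ, α = δ + ω ^ e}

theorem lastE_spec {α : Ordinal.{0}} (h : 0 < α) : ∃ δ, α = δ + ω ^ lastE α := by
  have hne : {e : Ordinal.{0} | ∃ δ, α = δ + ω ^ e}.Nonempty := by
    obtain ⟨e, δ, he⟩ := exists_decomp α h
    exact ⟨e, δ, he⟩
  exact csInf_mem hne

theorem lastE_eq {α δ e : Ordinal.{0}} (h : α = δ + ω ^ e) : lastE α = e := by
  have hpos : 0 < α := by
    rw [h]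
    exact lt_of_lt_of_le (opow_pos e omega0_pos) (le_add_self)
  obtain ⟨δ', h'⟩ := lastE_spec hpos
  exact eqexp (h'.symm.trans h)

theorem lastE_zero : lastE 0 = 0 := by
  have hempty : {e : Ordinal.{0} | ∃ δ, (0 : Ordinal) = δ + ω ^ e} = ∅ := by
    ext e
    simp only [Set.mem_setOf_eq, Set.mem_empty_iff_false, iff_false]
    rintro ⟨δ, hδ⟩
    have h := lt_of_lt_of_le (opow_pos e omega0_pos) (le_add_self : ω ^ e ≤ δ + ω ^ e)
    rw [← hδ] at h
    exact h.false
  rw [lastE, hempty, Ordinal.sInf_empty]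

theorem lastE_add {γ ξ : Ordinal.{0}} (h : 0 < ξ) : lastE (γ + ξ) = lastE ξ := by
  obtain ⟨δ, hδ⟩ := lastE_spec h
  refine lastE_eq (δ := γ + δ) ?_
  conv_lhs => rw [hδ]
  rw [add_assoc]

theorem lastE_opow (β : Ordinal.{0}) : lastE (ω ^ β) = β :=
  lastE_eq (by rw [zero_add])

theorem lastE_succ (β : Ordinal.{0}) : lastE (β + 1) = 0 :=
  lastE_eq (by rw [opow_zero])

theorem lastE_le {ξ β : Ordinal.{0}} (h : ξ ≤ ω ^ β) (hξ : 0 < ξ) : lastE ξ ≤ β := by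
  obtain ⟨δ, hδ⟩ := lastE_spec hξ
  have h0 : ω ^ lastE ξ ≤ ξ := by
    conv_rhs => rw [hδ]
    exact le_add_self
  have h1 : ω ^ lastE ξ ≤ ω ^ β := le_trans h0 h
  exact (Ordinal.opow_le_opow_iff_right one_lt_omega0).1 h1

/-! ### The closure step -/

noncomputable def stepO (γ β : Ordinal.{0}) : Ordinal.{0} :=
  sInf {α | γ ≤ α ∧ β ≤ lastE α}

theorem stepO_set_nonempty (γ β : Ordinal.{0}) :
    {α : Ordinal.{0} | γ ≤ α ∧ β ≤ lastE α}.Nonempty := by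
  refine ⟨γ + ω ^ β, le_self_add, ?_⟩
  rw [lastE_add (opow_pos β omega0_pos), lastE_opow]

theorem stepO_mem (γ β : Ordinal.{0}) : γ ≤ stepO γ β ∧ β ≤ lastE (stepO γ β) :=
  csInf_mem (stepO_set_nonempty γ β)

theorem stepO_le {γ β x : Ordinal.{0}} (h1 : γ ≤ x) (h2 : β ≤ lastE x) : stepO γ β ≤ x :=
  csInf_le' ⟨h1, h2⟩

theorem stepO_le_add (γ β : Ordinal.{0}) : stepO γ β ≤ γ + ω ^ β :=
  stepO_le (le_self_add)
    (by rw [lastE_add (opow_pos β omega0_pos), lastE_opow])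

theorem lastE_stepO {γ β : Ordinal.{0}} (hE : lastE γ < β) : lastE (stepO γ β) = β := by
  have h1 : γ < stepO γ β := by
    rcases lt_or_eq_of_le (stepO_mem γ β).1 with h | h
    · exact h
    · exfalso
      have h2 := (stepO_mem γ β).2
      rw [← h] at h2
      exact absurd h2 hE.not_ge
  obtain ⟨ξ, hξ⟩ : ∃ ξ, stepO γ β = γ + ξ :=
    ⟨stepO γ β - γ, (Ordinal.add_sub_cancel_of_le h1.le).symm⟩
  have hξ0 : 0 < ξ := by
    rcases (zero_le (a := ξ)).lt_or_eq with h | h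
    · exact h
    · rw [← h, add_zero] at hξ
      rw [hξ] at h1
      exact absurd h1 (lt_irrefl _)
  have hξle : ξ ≤ ω ^ β := by
    have h2 := stepO_le_add γ β
    rw [hξ] at h2
    exact (add_le_add_iff_left γ).1 h2
  have h3 := (stepO_mem γ β).2
  rw [hξ, lastE_add hξ0] at h3 ⊢
  exact le_antisymm (lastE_le hξle hξ0) h3

theorem lastE_stepO' (γ β : Ordinal.{0}) : stepO γ β = γ ∨ lastE (stepO γ β) = β := by
  rcases le_or_gt β (lastE γ) with h | h
  · left; exact le_antisymm (stepO_le le_rfl h) (stepO_mem γ β).1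
  · right; exact lastE_stepO h

/-! ### The closure of a vector to an exact chain -/

noncomputable def clF (v : ℕ → Ordinal.{0}) (K k : ℕ) : Ordinal.{0} :=
  if K ≤ k then 0 else stepO (v k) (clF v K (k + 1))
  termination_by K - k
  decreasing_by omega

theorem clF_stop {v : ℕ → Ordinal.{0}} {K k : ℕ} (h : K ≤ k) : clF v K k = 0 := by
  rw [clF, if_pos h]

theorem clF_rec {v : ℕ → Ordinal.{0}} {K k : ℕ} (h : ¬ K ≤ k) :
    clF v K k = stepO (v k) (clF v K (k + 1)) := by
  rw [clF]; rw [if_neg h]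

theorem clF_ge {v : ℕ → Ordinal.{0}} {K : ℕ} (hsupp : ∀ k, K ≤ k → v k = 0) (k : ℕ) :
    v k ≤ clF v K k := by
  by_cases h : K ≤ k
  · rw [clF_stop h, hsupp k h]
  · rw [clF_rec h]
    exact (stepO_mem _ _).1

theorem clF_le_pt {v : ℕ → Ordinal.{0}} {K : ℕ} {x : ℕ → Ordinal.{0}}
    (hx : ∀ k, x (k + 1) ≤ lastE (x k)) (hvx : ∀ k, v k ≤ x k) :
    ∀ k, clF v K k ≤ x k := by
  have H : ∀ j k, K - k ≤ j → clF v K k ≤ x k := by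
    intro j
    induction j with
    | zero =>
      intro k hk
      rw [clF_stop (by omega)]
      exact zero_le
    | succ j ihj =>
      intro k hk
      by_cases h : K ≤ k
      · rw [clF_stop h]; exact zero_le
      · rw [clF_rec h]
        exact stepO_le (hvx k) (le_trans (ihj (k + 1) (by omega)) (hx k))
  exact fun k => H (K - k) k le_rfl

theorem clF_exact {v : ℕ → Ordinal.{0}} {K : ℕ}
    (hdom : ∀ k, lastE (v k) ≤ clF v K (k + 1)) (k : ℕ) :
    lastE (clF v K k) = clF v K (k + 1) := by
  by_cases h : K ≤ k
  · rw [clF_stop h, clF_stop (by omega : K ≤ k + 1), lastE_zero]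
  · rw [clF_rec h]
    rcases lastE_stepO' (v k) (clF v K (k + 1)) with h' | h'
    · rw [h']
      have h2 := (stepO_mem (v k) (clF v K (k + 1))).2
      rw [h'] at h2
      exact le_antisymm (hdom k) h2
    · exact h'

end RC0

namespace RC0

open Ordinal RCForm RCSeq

/-! ### The Ignatiev-style model -/

/-- A point of the model: a decreasing "exact chain bounded" sequence. -/
def IsPt (x : ℕ → Ordinal.{0}) : Prop := ∀ k, x (k + 1) ≤ lastE (x k)

/-- Satisfaction in the model. -/
def sat : (ℕ → Ordinal.{0}) → RCForm → Prop
  | _, .top => True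
  | x, .and A B => sat x A ∧ sat x B
  | x, .dia n A => ∃ y, IsPt y ∧ (∀ k, k < n → y k = x k) ∧ y n < x n ∧ sat y A

/-- Representation theorem: every formula defines a threshold set given by an
exact chain with finite support. -/
theorem rep (A : RCForm) : ∃ c : ℕ → Ordinal.{0}, ∃ K : ℕ,
    (∀ k, lastE (c k) = c (k + 1)) ∧ (∀ k, K ≤ k → c k = 0) ∧
    (∀ x, IsPt x → (sat x A ↔ ∀ k, c k ≤ x k)) := by
  induction A with
  | top =>
    refine ⟨fun _ => 0, 0, fun k => by rw [lastE_zero], fun k _ => rfl, ?_⟩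
    intro x _
    exact ⟨fun _ k => zero_le, fun _ => trivial⟩
  | and A B ihA ihB =>
    obtain ⟨a, Ka, haE, haS, haT⟩ := ihA
    obtain ⟨b, Kb, hbE, hbS, hbT⟩ := ihB
    set v : ℕ → Ordinal.{0} := fun k => max (a k) (b k) with hv
    set K := max Ka Kb with hK
    have hsupp : ∀ k, K ≤ k → v k = 0 := by
      intro k hk
      have h1 : a k = 0 := haS k (le_trans (le_max_left _ _) hk)
      have h2 : b k = 0 := hbS k (le_trans (le_max_right _ _) hk)
      simp only [hv, h1, h2, max_self]
    have hge := clF_ge (v := v) (K := K) hsupp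
    have hdom : ∀ k, lastE (v k) ≤ clF v K (k + 1) := by
      intro k
      rcases le_total (a k) (b k) with h | h
      · have h1 : v k = b k := max_eq_right h
        rw [h1, hbE k]
        exact le_trans (le_max_right (a (k+1)) (b (k+1))) (hge (k + 1))
      · have h1 : v k = a k := max_eq_left h
        rw [h1, haE k]
        exact le_trans (le_max_left (a (k+1)) (b (k+1))) (hge (k + 1))
    refine ⟨clF v K, K, clF_exact hdom, fun k hk => clF_stop hk, ?_⟩
    intro x hx
    show (sat x A ∧ sat x B) ↔ _
    rw [haT x hx, hbT x hx]
    constructor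
    · rintro ⟨h1, h2⟩
      exact clF_le_pt hx (fun k => max_le (h1 k) (h2 k))
    · intro h
      exact ⟨fun k => le_trans (le_trans (le_max_left _ _) (hge k)) (h k),
             fun k => le_trans (le_trans (le_max_right _ _) (hge k)) (h k)⟩
  | dia n A ihA =>
    obtain ⟨a, Ka, haE, haS, haT⟩ := ihA
    set v : ℕ → Ordinal.{0} :=
      fun k => if k < n then a k else if k = n then a n + 1 else 0 with hv
    set K := max Ka (n + 1) with hK
    have hsupp : ∀ k, K ≤ k → v k = 0 := by
      intro k hk
      have h1 : ¬ k < n := by omega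
      have h2 : ¬ k = n := by omega
      simp only [hv, if_neg h1, if_neg h2]
    have hge := clF_ge (v := v) (K := K) hsupp
    have hdom : ∀ k, lastE (v k) ≤ clF v K (k + 1) := by
      intro k
      rcases lt_trichotomy k n with h | h | h
      · have h1 : v k = a k := by simp only [hv, if_pos h]
        rw [h1, haE k]
        have h2 : a (k + 1) ≤ v (k + 1) := by
          by_cases h3 : k + 1 < n
          · simp only [hv, if_pos h3]; exact le_rfl
          · have h4 : k + 1 = n := by omega
            have h5 : v (k + 1) = a n + 1 := by
              simp only [hv]
              rw [if_neg h3, if_pos h4]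
            rw [h5, h4]
            exact le_self_add
        exact le_trans h2 (hge (k + 1))
      · subst h
        have h1 : v k = a k + 1 := by simp [hv]
        rw [h1, lastE_succ]
        exact zero_le
      · have h1 : v k = 0 := by
          have h2 : ¬ k < n := by omega
          have h3 : ¬ k = n := by omega
          simp only [hv, if_neg h2, if_neg h3]
        rw [h1, lastE_zero]
        exact zero_le
    refine ⟨clF v K, K, clF_exact hdom, fun k hk => clF_stop hk, ?_⟩
    intro x hx
    have key : sat x (.dia n A) ↔ ((∀ k, k < n → a k ≤ x k) ∧ a n < x n) := by
      constructor
      · rintro ⟨y, hy, hagree, hlt, hsat⟩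
        have hya := (haT y hy).1 hsat
        exact ⟨fun k hk => (hagree k hk) ▸ hya k, lt_of_le_of_lt (hya n) hlt⟩
      · rintro ⟨h1, h2⟩
        have hyPt : IsPt (fun k => if k < n then x k else a k) := by
          intro k
          by_cases hk1 : k + 1 < n
          · have hk0 : k < n := by omega
            simp only [if_pos hk1, if_pos hk0]
            exact hx k
          · by_cases hk0 : k < n
            · have hkn : k + 1 = n := by omega
              simp only [if_neg hk1, if_pos hk0]
              have h3 : a (k + 1) < x (k + 1) := by rw [hkn]; exact h2
              exact le_trans h3.le (hx k)
            · simp only [if_neg hk1, if_neg hk0]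
              rw [haE k]
        refine ⟨fun k => if k < n then x k else a k, hyPt, ?_, ?_, ?_⟩
        · intro k hk; simp only [if_pos hk]
        · simpa using h2
        · rw [haT _ hyPt]
          intro k
          by_cases hk : k < n
          · simp only [if_pos hk]; exact h1 k hk
          · simp only [if_neg hk]; exact le_rfl
    rw [key]
    have key2 : ((∀ k, k < n → a k ≤ x k) ∧ a n < x n) ↔ ∀ k, v k ≤ x k := by
      constructor
      · rintro ⟨h1, h2⟩ k
        rcases lt_trichotomy k n with h | h | h
        · simp only [hv, if_pos h]; exact h1 k h
        · subst h
          have h6 : v k = a k + 1 := by simp [hv]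
          rw [h6, Ordinal.add_one_eq_succ]
          exact Order.succ_le_of_lt h2
        · have h3 : ¬ k < n := by omega
          have h4 : ¬ k = n := by omega
          simp only [hv, if_neg h3, if_neg h4]
          exact zero_le
      · intro h
        constructor
        · intro k hk
          have := h k
          simpa only [hv, if_pos hk] using this
        · have := h n
          have h6 : v n = a n + 1 := by simp [hv]
          rw [h6] at this
          have h5 : a n < a n + 1 := by
            rw [Ordinal.add_one_eq_succ]; exact Order.lt_succ _
          exact lt_of_lt_of_le h5 this
    rw [key2]
    constructor
    · intro h
      exact clF_le_pt hx h
    · intro h k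
      exact le_trans (hge k) (h k)

/-- Soundness of `RC⁰` with respect to the model. -/
theorem sound {A B : RCForm} (h : RCSeq A B) : ∀ x, IsPt x → sat x A → sat x B := by
  induction h with
  | id A => exact fun x _ h => h
  | top A => exact fun x _ _ => trivial
  | cut h1 h2 ih1 ih2 => exact fun x hx h => ih2 x hx (ih1 x hx h)
  | andE₁ A B => exact fun x _ h => h.1
  | andE₂ A B => exact fun x _ h => h.2
  | andI h1 h2 ih1 ih2 => exact fun x hx h => ⟨ih1 x hx h, ih2 x hx h⟩
  | mono n h ih =>
    rintro x hx ⟨y, hy, hag, hlt, hs⟩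
    exact ⟨y, hy, hag, hlt, ih y hy hs⟩
  | trans n A =>
    rintro x hx ⟨y, hy, hag, hlt, hs⟩
    obtain ⟨z, hz, hag', hlt', hs'⟩ := hs
    exact ⟨z, hz, fun k hk => (hag' k hk).trans (hag k hk), lt_trans hlt' hlt, hs'⟩
  | @monoN n m A hmn =>
    intro x hx hsx
    obtain ⟨c, K, hcE, hcS, hcT⟩ := rep A
    obtain ⟨y, hy, hag, hlt, hsA⟩ := hsx
    have hyc := (hcT y hy).1 hsA
    have hkx : ∀ k, k < n → c k ≤ x k := fun k hk => (hag k hk) ▸ hyc k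
    have hnx : c n < x n := lt_of_le_of_lt (hyc n) hlt
    have hcm : c m < x m := by
      by_contra hcon
      push_neg at hcon
      have hxm : x m = c m := le_antisymm hcon (hkx m hmn)
      have hprop : ∀ j, m + j ≤ n → x (m + j) = c (m + j) := by
        intro j
        induction j with
        | zero => intro _; simpa using hxm
        | succ j ihj =>
          intro hj
          have h1 : x (m + j) = c (m + j) := ihj (by omega)
          have h2 : x (m + j + 1) ≤ lastE (x (m + j)) := hx _
          rw [h1, hcE] at h2
          refine le_antisymm (by rw [show m + (j + 1) = m + j + 1 from rfl]; exact h2) ?_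
          rcases lt_or_eq_of_le hj with h3 | h3
          · exact hkx _ (by omega)
          · rw [show m + (j + 1) = n from h3]
            exact hnx.le
      have hfin := hprop (n - m) (by omega)
      rw [show m + (n - m) = n from by omega] at hfin
      rw [hfin] at hnx
      exact absurd hnx (lt_irrefl _)
    have hyPt : IsPt (fun k => if k < m then x k else c k) := by
      intro k
      by_cases hk1 : k + 1 < m
      · have hk0 : k < m := by omega
        simp only [if_pos hk1, if_pos hk0]
        exact hx k
      · by_cases hk0 : k < m
        · have hkm : k + 1 = m := by omega
          simp only [if_neg hk1, if_pos hk0]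
          have h3 : c (k + 1) < x (k + 1) := by rw [hkm]; exact hcm
          exact le_trans h3.le (hx k)
        · simp only [if_neg hk1, if_neg hk0]
          rw [hcE k]
    refine ⟨fun k => if k < m then x k else c k, hyPt, ?_, ?_, ?_⟩
    · intro k hk; simp only [if_pos hk]
    · simpa using hcm
    · rw [hcT _ hyPt]
      intro k
      by_cases hk : k < m
      · simp only [if_pos hk]; exact hkx k (lt_trans hk hmn)
      · simp only [if_neg hk]; exact le_rfl
  | @axJ n m A B hmn =>
    rintro x hx ⟨⟨y, hy, hagy, hlty, hsy⟩, ⟨z, hz, hagz, hltz, hsz⟩⟩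
    refine ⟨y, hy, hagy, hlty, hsy, ?_⟩
    refine ⟨z, hz, fun k hk => (hagz k hk).trans (hagy k (lt_trans hk hmn)).symm, ?_, hsz⟩
    rw [hagy m hmn]
    exact hltz

/-! ### The ordinal rank of a formula, and well-foundedness -/

noncomputable def rnk (A : RCForm) : Ordinal.{0} := (rep A).choose 0

theorem rnk_lt {A B : RCForm} (h : RCLt0 A B) : rnk A < rnk B := by
  obtain ⟨Ka, haE, haS, haT⟩ := (rep A).choose_spec
  obtain ⟨Kb, hbE, hbS, hbT⟩ := (rep B).choose_spec
  have hbPt : IsPt ((rep B).choose) := fun k => (hbE k).ge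
  have hsatB : sat ((rep B).choose) B := (hbT _ hbPt).2 (fun k => le_rfl)
  have hdia : sat ((rep B).choose) (.dia 0 A) := sound h _ hbPt hsatB
  obtain ⟨y, hy, _, hlt, hsA⟩ := hdia
  have hya := (haT y hy).1 hsA
  exact lt_of_le_of_lt (hya 0) hlt

theorem rnk_congr {A B : RCForm} (h1 : RCSeq A B) (h2 : RCSeq B A) : rnk A = rnk B := by
  obtain ⟨Ka, haE, haS, haT⟩ := (rep A).choose_spec
  obtain ⟨Kb, hbE, hbS, hbT⟩ := (rep B).choose_spec
  have haPt : IsPt ((rep A).choose) := fun k => (haE k).ge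
  have hbPt : IsPt ((rep B).choose) := fun k => (hbE k).ge
  have hsatA : sat ((rep A).choose) A := (haT _ haPt).2 (fun k => le_rfl)
  have hsatB : sat ((rep B).choose) B := (hbT _ hbPt).2 (fun k => le_rfl)
  have h3 := (hbT _ haPt).1 (sound h1 _ haPt hsatA)
  have h4 := (haT _ hbPt).1 (sound h2 _ hbPt hsatB)
  exact le_antisymm (h4 0) (h3 0)

theorem wf_RCLt0 : WellFounded RCLt0 := by
  refine Subrelation.wf (r := InvImage (· < ·) rnk) ?_ (InvImage.wf rnk Ordinal.lt_wf)
  intro a b h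
  exact rnk_lt h

end RC0


/-- The set of `RC⁰` formulas is well-founded under `<₀`, and consequently the
Beklemishev ordinal notation system `(W/∼, <₀)` is a well-ordering. -/
theorem rc0_lt0_wellFounded_and_wellOrder :
    WellFounded RCLt0 ∧ IsWellOrder RCW RCWLt := by
  refine ⟨RC0.wf_RCLt0, ?_⟩
  have tri : ∀ a b : RCW, RCWLt a b ∨ a = b ∨ RCWLt b a := by
    intro a b
    refine Quotient.inductionOn₂ a b ?_
    intro A B
    obtain ⟨u, hu⟩ := RC0.normal_form A
    obtain ⟨v, hv⟩ := RC0.normal_form B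
    rcases lt_trichotomy (RC0.odo u) (RC0.odo v) with h | h | h
    · left
      exact (RCSeq.cut hv.1 (RCSeq.cut (RC0.comp_lt h) (RCSeq.mono 0 hu.2)) : RCLt0 A B)
    · right; left
      refine Quotient.sound ?_
      have h2 := hu.trans' ((RC0.comp_eq h).trans' hv.symm')
      exact ⟨h2.1, h2.2⟩
    · right; right
      exact (RCSeq.cut hu.1 (RCSeq.cut (RC0.comp_lt h) (RCSeq.mono 0 hv.2)) : RCLt0 B A)
  have htrans : ∀ a b c : RCW, RCWLt a b → RCWLt b c → RCWLt a c := by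
    intro a b c
    refine Quotient.inductionOn₃ a b c ?_
    intro A B C hab hbc
    exact (RCSeq.cut hbc (RCSeq.cut (RCSeq.mono 0 hab) (RCSeq.trans 0 _)) : RCLt0 A C)
  have hresp : ∀ A B : RCForm, RCSetoid.r A B → RC0.rnk A = RC0.rnk B := by
    intro A B hAB
    exact RC0.rnk_congr hAB.1 hAB.2
  have hwfq : WellFounded RCWLt := by
    refine Subrelation.wf (r := InvImage (· < ·) (Quotient.lift RC0.rnk hresp)) ?_
      (InvImage.wf _ Ordinal.lt_wf)
    intro a b h
    revert h
    refine Quotient.inductionOn₂ a b ?_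
    intro A B h
    exact RC0.rnk_lt h
  haveI h1 : IsTrichotomous RCW RCWLt := ⟨fun a b hab hba => ((tri a b).resolve_left hab).resolve_right hba⟩
  haveI h2 : IsTrans RCW RCWLt := ⟨htrans⟩
  haveI h3 : IsWellFounded RCW RCWLt := ⟨hwfq⟩
  constructor
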